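/- Let T : H → H satisfy ‖T u' − T u''‖ ≤ C₁‖u' − u''‖_M for a continuous seminorm ‖·‖_M, and suppose the iteration u^{k+1} = u^k + λ_k(T u^k − u^k) with λ_k ∈ [ε, 2−ε] satisfies Σ_k ‖u^{k+1} − u^k‖_M² < ∞. Then the quantities φ_k := ‖T u^k − u^k‖² satisfy a recursion φ_{k+1} ≤ η φ_k + C‖u^{k+1} − u^k‖_M² for some η < 1 and constant C, and consequently φ_k → 0, i.e., ‖T u^k − u^k‖ → 0 strongly. -/

import Mathlib

open Filter Finset


lemma young18 (x y s : ℝ) (hs : 0 < s) : (y + x)^2 ≤ (1+s)*x^2 + (1+1/s)*y^2 := by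
  have h1s : s * (1/s) = 1 := mul_one_div_cancel hs.ne'
  nlinarith [sq_nonneg (s*x - y), hs, sq_nonneg (x - y)]

lemma tendsto_of_recursion18 (φ α : ℕ → ℝ) (η C : ℝ) (hη0 : 0 ≤ η) (hη1 : η < 1)
    (hφ : ∀ k, 0 ≤ φ k) (hC : 0 ≤ C)
    (hrec : ∀ k, φ (k+1) ≤ η * φ k + C * α k) (hα : ∀ k, 0 ≤ α k) (hsum : Summable α) :
    Tendsto φ atTop (nhds 0) := by
  set c : ℕ → ℝ := fun k => ∑ j ∈ Finset.range (k+1), η^(k-j) * α j with hc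
  have hbound : ∀ k, φ (k+1) ≤ η^(k+1) * φ 0 + C * c k := by
    intro k
    induction k with
    | zero =>
      have : c 0 = α 0 := by simp [hc]
      rw [this, pow_one]
      exact hrec 0
    | succ k ih =>
      have h2 := hrec (k+1)
      have h3 : η * φ (k+1) ≤ η * (η^(k+1) * φ 0 + C * c k) :=
        mul_le_mul_of_nonneg_left ih hη0
      have h4 : η * c k = ∑ j ∈ Finset.range (k+1), η^(k+1-j) * α j := by
        rw [hc, Finset.mul_sum]
        refine Finset.sum_congr rfl fun j hj => ?_
        have hjk : j ≤ k := Nat.lt_succ_iff.mp (Finset.mem_range.mp hj)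
        rw [← mul_assoc, ← pow_succ']
        congr 2
        omega
      have h5 : c (k+1) = ∑ j ∈ Finset.range (k+1), η^(k+1-j) * α j + α (k+1) := by
        have h6 := Finset.sum_range_succ (fun j => η^(k+1-j) * α j) (k+1)
        rw [hc]
        simpa using h6
      calc φ (k+2) ≤ η * φ (k+1) + C * α (k+1) := h2
        _ ≤ η * (η^(k+1) * φ 0 + C * c k) + C * α (k+1) := by linarith
        _ = η^(k+2) * φ 0 + C * (η * c k + α (k+1)) := by ring
        _ = η^(k+2) * φ 0 + C * c (k+1) := by rw [h4, h5]
  have hcsum : Summable c := by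
    have hαs : Summable (fun x => ‖α x‖) := by
      refine hsum.congr fun x => ?_
      rw [Real.norm_eq_abs, abs_of_nonneg (hα x)]
    have hηs : Summable (fun x : ℕ => ‖η^x‖) := by
      refine Summable.congr (summable_geometric_of_lt_one hη0 hη1) fun x => ?_
      rw [norm_pow, Real.norm_eq_abs, abs_of_nonneg hη0]
    have h := Summable.of_norm (summable_norm_sum_mul_antidiagonal_of_summable_norm
      (f := α) (g := fun x => η^x) hαs hηs)
    refine h.congr fun n => ?_
    rw [Finset.Nat.sum_antidiagonal_eq_sum_range_succ_mk]
    exact Finset.sum_congr rfl fun j _ => mul_comm _ _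
  have hc0 : Tendsto c atTop (nhds 0) := hcsum.tendsto_atTop_zero
  have hb0 : Tendsto (fun k => η^(k+1) * φ 0 + C * c k) atTop (nhds 0) := by
    have h1 : Tendsto (fun k : ℕ => η^(k+1) * φ 0) atTop (nhds 0) := by
      have := (tendsto_pow_atTop_nhds_zero_of_lt_one hη0 hη1).mul_const (φ 0)
      rw [zero_mul] at this
      exact this.comp (tendsto_add_atTop_nat 1)
    have h2 : Tendsto (fun k => C * c k) atTop (nhds 0) := by
      simpa using hc0.const_mul C
    simpa using h1.add h2
  have hshift : Tendsto (fun k => φ (k+1)) atTop (nhds 0) :=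
    squeeze_zero (fun k => hφ (k+1)) hbound hb0
  exact (tendsto_add_atTop_iff_nat 1).mp hshift


/-- If `T` is Lipschitz w.r.t. the `M`-seminorm, the iterates satisfy the recursion
`φ_{k+1} ≤ η φ_k + C ‖u^{k+1} − u^k‖_M²` with `η < 1`, and `‖T u^k − u^k‖ → 0`. -/
theorem stmt18 {H : Type} [NormedAddCommGroup H] [InnerProductSpace ℝ H] [CompleteSpace H]
    (M : H →L[ℝ] H) (T : H → H) (C₁ ε : ℝ) (hε : 0 < ε)
    (hMsa : ∀ x y : H, (inner ℝ (M x) y : ℝ) = inner ℝ x (M y))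
    (hMpos : ∀ x : H, 0 ≤ (inner ℝ (M x) x : ℝ))
    (hTLip : ∀ u u' : H, ‖T u - T u'‖ ≤ C₁ * Real.sqrt (inner ℝ (M (u - u')) (u - u')))
    (lam : ℕ → ℝ) (hlam : ∀ k, lam k ∈ Set.Icc ε (2 - ε))
    (u : ℕ → H) (hiter : ∀ k, u (k + 1) = u k + lam k • (T (u k) - u k))
    (hsum : Summable (fun k => (inner ℝ (M (u (k + 1) - u k)) (u (k + 1) - u k) : ℝ))) :
    (∃ η C : ℝ, η < 1 ∧ ∀ k : ℕ,
        ‖T (u (k + 1)) - u (k + 1)‖ ^ 2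
          ≤ η * ‖T (u k) - u k‖ ^ 2
            + C * (inner ℝ (M (u (k + 1) - u k)) (u (k + 1) - u k) : ℝ)) ∧
    Tendsto (fun k => ‖T (u k) - u k‖) atTop (nhds 0) := by
  have hε1 : ε ≤ 1 := by have h := hlam 0; have := h.1; have := h.2; linarith
  set a : ℝ := 1 - ε with ha
  have ha0 : 0 ≤ a := by simp [ha]; linarith
  have ha1 : a < 1 := by simp [ha]; linarith
  set s : ℝ := (1 - a^2)/(1 + a^2) with hsdef
  have hd : (0:ℝ) < 1 + a^2 := by positivity
  have hs0 : 0 < s := div_pos (by nlinarith) hd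
  set η : ℝ := (1 + s) * a^2 with hηdef
  set C : ℝ := (1 + 1/s) * C₁^2 with hCdef
  have hη0 : 0 ≤ η := mul_nonneg (by linarith) (sq_nonneg a)
  have hη1 : η < 1 := by
    have hs' : s * (1+a^2) = 1 - a^2 := div_mul_cancel₀ _ hd.ne'
    rw [hηdef]
    nlinarith [hs', hd, sq_nonneg a]
  have hC0 : 0 ≤ C := mul_nonneg (by have := one_div_pos.mpr hs0; linarith) (sq_nonneg C₁)
  set m : ℕ → ℝ := fun k => (inner ℝ (M (u (k + 1) - u k)) (u (k + 1) - u k) : ℝ) with hm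
  have key : ∀ k : ℕ, ‖T (u (k + 1)) - u (k + 1)‖ ^ 2
      ≤ η * ‖T (u k) - u k‖ ^ 2 + C * m k := by
    intro k
    have hm0 : 0 ≤ m k := hMpos _
    have hsq : Real.sqrt (m k) ^ 2 = m k := Real.sq_sqrt hm0
    have hrk : T (u (k+1)) - u (k+1)
        = (T (u (k+1)) - T (u k)) + (1 - lam k) • (T (u k) - u k) := by
      rw [hiter k]; module
    have habs : |1 - lam k| ≤ a := by
      have h := hlam k
      rw [abs_le]; constructor
      · have := h.2; simp [ha]; linarith
      · have := h.1; simp [ha]; linarith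
    have h1 : ‖T (u (k+1)) - u (k+1)‖ ≤ C₁ * Real.sqrt (m k) + a * ‖T (u k) - u k‖ := by
      rw [hrk]
      refine (norm_add_le _ _).trans (add_le_add (hTLip _ _) ?_)
      rw [norm_smul, Real.norm_eq_abs]
      exact mul_le_mul_of_nonneg_right habs (norm_nonneg _)
    have h2 : ‖T (u (k+1)) - u (k+1)‖ ^ 2
        ≤ (C₁ * Real.sqrt (m k) + a * ‖T (u k) - u k‖) ^ 2 :=
      pow_le_pow_left₀ (norm_nonneg _) h1 2
    have h3 := young18 (a * ‖T (u k) - u k‖) (C₁ * Real.sqrt (m k)) s hs0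
    calc ‖T (u (k + 1)) - u (k + 1)‖ ^ 2
        ≤ (C₁ * Real.sqrt (m k) + a * ‖T (u k) - u k‖) ^ 2 := h2
      _ ≤ (1+s) * (a * ‖T (u k) - u k‖)^2 + (1+1/s) * (C₁ * Real.sqrt (m k))^2 := h3
      _ = η * ‖T (u k) - u k‖ ^ 2 + C * m k := by
          rw [hηdef, hCdef, mul_pow, mul_pow, hsq]; ring
  refine ⟨⟨η, C, hη1, key⟩, ?_⟩
  have hφ : Tendsto (fun k => ‖T (u k) - u k‖ ^ 2) atTop (nhds 0) := by
    refine tendsto_of_recursion18 (fun k => ‖T (u k) - u k‖ ^ 2) m η C hη0 hη1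
      (fun k => sq_nonneg _) hC0 key (fun k => hMpos _) hsum
  have := (Real.continuous_sqrt.tendsto 0).comp hφ
  rw [Real.sqrt_zero] at this
  refine this.congr fun k => ?_
  simp [Function.comp, Real.sqrt_sq (norm_nonneg _)]
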